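/- arXiv:2306.13331 — 2 statements merged into one kernel-verified Lean document; each statement's English description precedes it below -/
import Mathlib

section
/- Integral bound implies convergence: if x ∈ W^{1,∞}_loc([0,∞); ℝⁿ) satisfies ∫₀^∞ ‖x(t)‖² dt < ∞ and x' = Ax + Bu with u essentially bounded, then x(t) → 0 as t → ∞. -/
open Matrix MeasureTheory

lemma dot_nonneg' {n : ℕ} (y : Fin n → ℝ) : 0 ≤ y ⬝ᵥ y :=
  Finset.sum_nonneg fun i _ => mul_self_nonneg _

lemma norm_le_sqrt_dot {n : ℕ} (y : Fin n → ℝ) : ‖y‖ ≤ Real.sqrt (y ⬝ᵥ y) := by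
  rw [pi_norm_le_iff_of_nonneg (Real.sqrt_nonneg _)]
  intro i
  have h1 : y i * y i ≤ y ⬝ᵥ y :=
    Finset.single_le_sum (f := fun j => y j * y j) (fun j _ => mul_self_nonneg _)
      (Finset.mem_univ i)
  have : ‖y i‖ = Real.sqrt (y i * y i) := by
    rw [Real.sqrt_mul_self_eq_abs]; exact (Real.norm_eq_abs _)
  rw [this]
  exact Real.sqrt_le_sqrt h1

lemma sq_norm_le_dot {n : ℕ} (y : Fin n → ℝ) : ‖y‖ ^ 2 ≤ y ⬝ᵥ y := by
  have h := norm_le_sqrt_dot y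
  have := Real.sq_sqrt (dot_nonneg' y)
  nlinarith [norm_nonneg y, Real.sqrt_nonneg (y ⬝ᵥ y)]

lemma abs_dot_le {n : ℕ} (y w : Fin n → ℝ) : |y ⬝ᵥ w| ≤ n * (‖y‖ * ‖w‖) := by
  calc |y ⬝ᵥ w| ≤ ∑ i, |y i * w i| := Finset.abs_sum_le_sum_abs _ _
    _ ≤ ∑ _i : Fin n, ‖y‖ * ‖w‖ := by
        refine Finset.sum_le_sum fun i _ => ?_
        rw [abs_mul]
        exact mul_le_mul (norm_le_pi_norm y i) (norm_le_pi_norm w i) (abs_nonneg _)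
          (norm_nonneg _)
    _ = n * (‖y‖ * ‖w‖) := by simp [Finset.sum_const, nsmul_eq_mul]

lemma exists_mulVec_bound {n m : ℕ} (A : Matrix (Fin n) (Fin m) ℝ) :
    ∃ a : ℝ, 0 ≤ a ∧ ∀ y, ‖A.mulVec y‖ ≤ a * ‖y‖ := by
  let L := LinearMap.toContinuousLinearMap A.mulVecLin
  exact ⟨‖L‖, norm_nonneg _, fun y => L.le_opNorm y⟩

lemma hasDerivAt_dot {n : ℕ} {x : ℝ → Fin n → ℝ} {v : Fin n → ℝ} {t : ℝ}
    (hx : HasDerivAt x v t) :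
    HasDerivAt (fun s => x s ⬝ᵥ x s) (2 * (x t ⬝ᵥ v)) t := by
  have hc := hasDerivAt_pi.1 hx
  have h : HasDerivAt (fun s => ∑ i, x s i * x s i)
      (∑ i, (v i * x t i + x t i * v i)) t :=
    HasDerivAt.fun_sum fun i _ => (hc i).mul (hc i)
  have heq : (∑ i, (v i * x t i + x t i * v i)) = 2 * (x t ⬝ᵥ v) := by
    simp only [dotProduct, Finset.mul_sum]
    rw [Finset.sum_add_distrib, ← Finset.sum_add_distrib]
    exact Finset.sum_congr rfl fun i _ => by ring
  simpa [dotProduct, heq] using h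

lemma gronwallBound_le' {δ K r : ℝ} (hδ : 0 ≤ δ) (hK : 1 ≤ K) (hr : 0 ≤ r) (hr1 : r ≤ 1) :
    gronwallBound δ K K r ≤ (δ + 1) * Real.exp K := by
  have hK0 : K ≠ 0 := by linarith
  rw [gronwallBound_of_K_ne_0 hK0, div_self hK0]
  simp only [one_mul]
  have h1 : Real.exp (K * r) ≤ Real.exp K := by
    apply Real.exp_le_exp.2; nlinarith
  have h2 : (0:ℝ) < Real.exp (K * r) := Real.exp_pos _
  have h3 : (0:ℝ) < Real.exp K := Real.exp_pos _
  nlinarith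

/-- If `x` solves `x' = Ax + Bu` with `u` (essentially) bounded and
`∫₀^∞ ‖x(t)‖² dt < ∞`, then `x(t) → 0` as `t → ∞`. -/
theorem L2_implies_convergence {n m : ℕ}
    (A : Matrix (Fin n) (Fin n) ℝ) (B : Matrix (Fin n) (Fin m) ℝ)
    (x : ℝ → (Fin n → ℝ)) (u : ℝ → (Fin m → ℝ))
    (hx : ∀ t : ℝ, 0 ≤ t → HasDerivAt x (A.mulVec (x t) + B.mulVec (u t)) t)
    (hu : ∃ C : ℝ, ∀ t : ℝ, 0 ≤ t → ‖u t‖ ≤ C)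
    (hL2 : IntegrableOn (fun t => x t ⬝ᵥ x t) (Set.Ici (0 : ℝ)) volume) :
    Filter.Tendsto x Filter.atTop (nhds 0) := by
  classical
  set f : ℝ → ℝ := fun t => x t ⬝ᵥ x t with hf_def
  set v : ℝ → Fin n → ℝ := fun t => A.mulVec (x t) + B.mulVec (u t) with hv_def
  obtain ⟨C, hC⟩ := hu
  have hC0 : 0 ≤ C := le_trans (norm_nonneg _) (hC 0 le_rfl)
  obtain ⟨a, ha0, ha⟩ := exists_mulVec_bound A
  obtain ⟨b, hb0, hb⟩ := exists_mulVec_bound B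
  set K : ℝ := 2 * n * a + 2 * n * b * C + 1 with hK_def
  have hK1 : 1 ≤ K := by
    have : (0:ℝ) ≤ 2 * n * a := by positivity
    have : (0:ℝ) ≤ 2 * n * b * C := by positivity
    simp only [hK_def]; linarith
  have hK0 : 0 < K := lt_of_lt_of_le one_pos hK1
  clear_value K
  -- nonnegativity of f
  have hf0 : ∀ t, 0 ≤ f t := fun t => dot_nonneg' (x t)
  -- derivative of f
  have hfd : ∀ t, 0 ≤ t → HasDerivAt f (2 * (x t ⬝ᵥ v t)) t :=
    fun t ht => hasDerivAt_dot (hx t ht)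
  -- bound on the derivative
  have hbound : ∀ t, 0 ≤ t → |2 * (x t ⬝ᵥ v t)| ≤ K * f t + K := by
    intro t ht
    have h1 : |x t ⬝ᵥ v t| ≤ n * (‖x t‖ * ‖v t‖) := abs_dot_le _ _
    have h2 : ‖v t‖ ≤ a * ‖x t‖ + b * C := by
      calc ‖v t‖ ≤ ‖A.mulVec (x t)‖ + ‖B.mulVec (u t)‖ := norm_add_le _ _
        _ ≤ a * ‖x t‖ + b * C := by
            have := hb (u t)
            have hbu : ‖B.mulVec (u t)‖ ≤ b * C :=
              le_trans (hb (u t)) (mul_le_mul_of_nonneg_left (hC t ht) hb0)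
            exact add_le_add (ha (x t)) hbu
    have h3 : ‖x t‖ ^ 2 ≤ f t := sq_norm_le_dot (x t)
    have h4 : (0:ℝ) ≤ ‖x t‖ := norm_nonneg _
    have h5 : ‖x t‖ ≤ 1 + f t := by nlinarith [sq_nonneg (‖x t‖ - 1)]
    have h6 : (0:ℝ) ≤ ‖v t‖ := norm_nonneg _
    have h7 : (0:ℝ) ≤ (n:ℝ) := Nat.cast_nonneg n
    rw [abs_mul]
    simp only [abs_two]
    have h8 : (n:ℝ) * (‖x t‖ * ‖v t‖) ≤ n * (‖x t‖ * (a * ‖x t‖ + b * C)) := by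
      apply mul_le_mul_of_nonneg_left _ h7
      exact mul_le_mul_of_nonneg_left h2 h4
    have h9 : (n:ℝ) * (‖x t‖ * (a * ‖x t‖ + b * C))
        = n * a * ‖x t‖^2 + n * b * C * ‖x t‖ := by ring
    have h10 : (n:ℝ) * a * ‖x t‖^2 ≤ n * a * f t := by
      apply mul_le_mul_of_nonneg_left h3; positivity
    have h11 : (n:ℝ) * b * C * ‖x t‖ ≤ n * b * C * (1 + f t) := by
      apply mul_le_mul_of_nonneg_left h5; positivity
    have hft := hf0 t
    simp only [hK_def]
    nlinarith
  -- Gronwall: short-time growth control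
  have key : ∀ s t : ℝ, 0 ≤ s → s ≤ t → f t ≤ gronwallBound (f s) K K (t - s) := by
    intro s t hs hst
    have hcont : ContinuousOn f (Set.Icc s t) := fun r hr =>
      ((hfd r (le_trans hs hr.1)).continuousAt).continuousWithinAt
    have := norm_le_gronwallBound_of_norm_deriv_right_le (f := f)
      (f' := fun r => 2 * (x r ⬝ᵥ v r)) (δ := f s) (K := K) (ε := K) (a := s) (b := t)
      hcont
      (fun r hr => ((hfd r (le_trans hs hr.1)).hasDerivWithinAt))
      (by rw [Real.norm_eq_abs, abs_of_nonneg (hf0 s)])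
      (fun r hr => by
        rw [Real.norm_eq_abs, Real.norm_eq_abs, abs_of_nonneg (hf0 r)]
        exact hbound r (le_trans hs hr.1))
      t ⟨hst, le_rfl⟩
    rwa [Real.norm_eq_abs, abs_of_nonneg (hf0 t)] at this
  set I : ℝ := ∫ t in Set.Ici (0:ℝ), f t with hI_def
  have hI0 : 0 ≤ I := setIntegral_nonneg measurableSet_Ici (fun t _ => hf0 t)
  clear_value I
  -- boundedness of f on [1, ∞)
  set M : ℝ := (I + 1) * Real.exp K with hM_def
  have hM0 : 0 ≤ M := by positivity
  clear_value M
  have hM : ∀ t : ℝ, 1 ≤ t → f t ≤ M := by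
    intro t ht
    have h01 : (0:ℝ) ≤ t - 1 := by linarith
    have hsub : Set.Icc (t-1) t ⊆ Set.Ici (0:ℝ) := fun r hr => le_trans h01 hr.1
    have hcont : ContinuousOn f (Set.Icc (t-1) t) := fun r hr =>
      ((hfd r (hsub hr)).continuousAt).continuousWithinAt
    obtain ⟨s₀, hs₀mem, hs₀min⟩ :=
      isCompact_Icc.exists_isMinOn (Set.nonempty_Icc.2 (by linarith)) hcont
    have hint : IntegrableOn f (Set.Icc (t-1) t) volume := hL2.mono_set hsub
    have hlow : f s₀ * (volume (Set.Icc (t-1) t)).toReal ≤ ∫ r in Set.Icc (t-1) t, f r :=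
      setIntegral_ge_of_const_le_real measurableSet_Icc measure_Icc_lt_top.ne
        (fun r hr => hs₀min hr) hint
    have hvol : (volume (Set.Icc (t-1) t)).toReal = 1 := by
      rw [Real.volume_Icc]
      norm_num
    have hup : ∫ r in Set.Icc (t-1) t, f r ≤ I := by
      rw [hI_def]
      apply setIntegral_mono_set hL2
      · exact Filter.Eventually.of_forall fun r => hf0 r
      · exact Filter.Eventually.of_forall hsub
    have hfs₀ : f s₀ ≤ I := by rw [hvol, mul_one] at hlow; linarith
    have hs₀0 : 0 ≤ s₀ := le_trans h01 hs₀mem.1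
    have hts₀ : t - s₀ ≤ 1 := by
      have := hs₀mem.1; linarith
    have := key s₀ t hs₀0 hs₀mem.2
    have hgb : gronwallBound (f s₀) K K (t - s₀) ≤ (f s₀ + 1) * Real.exp K :=
      gronwallBound_le' (hf0 s₀) hK1 (by linarith [hs₀mem.2]) hts₀
    have hmono : (f s₀ + 1) * Real.exp K ≤ (I + 1) * Real.exp K := by
      apply mul_le_mul_of_nonneg_right _ (Real.exp_pos K).le
      linarith
    simp only [hM_def]
    linarith
  -- Lipschitz bound on [1, ∞)
  set L : ℝ := K * M + K with hL_def
  have hL0 : 0 < L := by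
    have : 0 ≤ K * M := by positivity
    simp only [hL_def]; linarith
  clear_value L
  have hLip : ∀ s t : ℝ, 1 ≤ s → s ≤ t → |f t - f s| ≤ L * (t - s) := by
    intro s t hs hst
    have hconv : Convex ℝ (Set.Icc s t) := convex_Icc s t
    have hderiv : ∀ r ∈ Set.Icc s t, HasDerivWithinAt f (2 * (x r ⬝ᵥ v r)) (Set.Icc s t) r :=
      fun r hr => ((hfd r (by linarith [hr.1])).hasDerivWithinAt)
    have hbd : ∀ r ∈ Set.Icc s t, ‖2 * (x r ⬝ᵥ v r)‖ ≤ L := by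
      intro r hr
      have hr0 : (0:ℝ) ≤ r := by linarith [hr.1]
      have h1 := hbound r hr0
      have h2 : f r ≤ M := hM r (by linarith [hr.1])
      rw [Real.norm_eq_abs]
      have : K * f r ≤ K * M := mul_le_mul_of_nonneg_left h2 hK0.le
      simp only [hL_def]
      linarith
    have := hconv.norm_image_sub_le_of_norm_hasDerivWithin_le hderiv hbd
      (Set.left_mem_Icc.2 hst) (Set.right_mem_Icc.2 hst)
    rwa [Real.norm_eq_abs, Real.norm_eq_abs, abs_of_nonneg (by linarith : (0:ℝ) ≤ t - s)]
      at this
  -- tail integrals are small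
  have htail : ∀ r : ℝ, 0 < r → ∃ T : ℝ, 1 ≤ T ∧ ∫ t in Set.Ici T, f t < r := by
    intro r hr
    have hmono : Monotone (fun k : ℕ => Set.Ico (0:ℝ) k) := by
      intro i j hij
      exact Set.Ico_subset_Ico le_rfl (by exact_mod_cast hij)
    have hunion : (⋃ k : ℕ, Set.Ico (0:ℝ) k) = Set.Ici 0 := by
      ext y
      simp only [Set.mem_iUnion, Set.mem_Ico, Set.mem_Ici]
      constructor
      · rintro ⟨k, hk, _⟩; exact hk
      · intro hy
        obtain ⟨k, hk⟩ := exists_nat_gt y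
        exact ⟨k, hy, hk⟩
    have htendsto : Filter.Tendsto (fun k : ℕ => ∫ t in Set.Ico (0:ℝ) k, f t)
        Filter.atTop (nhds I) := by
      have := tendsto_setIntegral_of_monotone (fun k : ℕ => measurableSet_Ico) hmono
        (by rw [hunion]; exact hL2)
      rw [hunion] at this
      rwa [← hI_def] at this
    have : ∀ᶠ k : ℕ in Filter.atTop, I - r < ∫ t in Set.Ico (0:ℝ) k, f t :=
      htendsto.eventually (eventually_gt_nhds (by linarith))
    obtain ⟨N, hN⟩ := this.exists_forall_of_atTop
    obtain ⟨N', hN'1, hN'⟩ : ∃ N' : ℕ, 1 ≤ (N':ℝ) ∧ I - r < ∫ t in Set.Ico (0:ℝ) N', f t := by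
      refine ⟨max N 1, ?_, hN _ (le_max_left _ _)⟩
      exact_mod_cast le_max_right N 1
    refine ⟨N', hN'1, ?_⟩
    have hsplit : ∫ t in Set.Ici (0:ℝ), f t
        = (∫ t in Set.Ico (0:ℝ) N', f t) + ∫ t in Set.Ici (N':ℝ), f t := by
      rw [← setIntegral_union ((Set.Iio_disjoint_Ici le_rfl).mono_left Set.Ico_subset_Iio_self) measurableSet_Ici
        (hL2.mono_set (Set.Ico_subset_Ici_self)) (hL2.mono_set (fun y hy => le_trans (by linarith : (0:ℝ) ≤ N') hy))]
      rw [Set.Ico_union_Ici_eq_Ici (by linarith : (0:ℝ) ≤ (N':ℝ))]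
    have : ∫ t in Set.Ici (N':ℝ), f t = I - ∫ t in Set.Ico (0:ℝ) N', f t := by
      rw [hI_def, hsplit]; ring
    rw [this]
    linarith
  -- f tends to 0
  have hftends : Filter.Tendsto f Filter.atTop (nhds 0) := by
    rw [Metric.tendsto_atTop]
    intro ε hε
    set δ : ℝ := min (ε / (2 * L)) 1 with hδ_def
    have hδ0 : 0 < δ := lt_min (by positivity) one_pos
    have hδ1 : δ ≤ 1 := min_le_right _ _
    have hδL : L * δ ≤ ε / 2 := by
      have : δ ≤ ε / (2 * L) := min_le_left _ _
      calc L * δ ≤ L * (ε / (2 * L)) := mul_le_mul_of_nonneg_left this hL0.le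
        _ = ε / 2 := by field_simp
    clear_value δ
    obtain ⟨T, hT1, hT⟩ := htail (ε / 2 * δ) (by positivity)
    refine ⟨T + 1, fun t ht => ?_⟩
    rw [Real.dist_eq, sub_zero, abs_of_nonneg (hf0 t)]
    by_contra hcon
    push_neg at hcon
    have htT : T ≤ t - δ := by linarith
    have hlower : ∀ s ∈ Set.Icc (t - δ) t, ε / 2 ≤ f s := by
      intro s hs
      have hs1 : 1 ≤ s := by linarith [hs.1]
      have := hLip s t hs1 hs.2
      have habs : f t - f s ≤ L * (t - s) := le_trans (le_abs_self _) this
      have hLts : L * (t - s) ≤ L * δ := by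
        apply mul_le_mul_of_nonneg_left _ hL0.le
        linarith [hs.1]
      linarith [habs, hLts, hδL, hcon]
    have hint : IntegrableOn f (Set.Icc (t - δ) t) volume :=
      hL2.mono_set (fun y hy => le_trans (by linarith : (0:ℝ) ≤ t - δ) hy.1)
    have hge : ε / 2 * (volume (Set.Icc (t - δ) t)).toReal ≤ ∫ s in Set.Icc (t - δ) t, f s :=
      setIntegral_ge_of_const_le_real measurableSet_Icc measure_Icc_lt_top.ne hlower hint
    have hvol : (volume (Set.Icc (t - δ) t)).toReal = δ := by
      rw [Real.volume_Icc]
      rw [ENNReal.toReal_ofReal (by linarith)]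
      ring
    have hup : ∫ s in Set.Icc (t - δ) t, f s ≤ ∫ s in Set.Ici T, f s := by
      apply setIntegral_mono_set (hL2.mono_set (fun y hy => le_trans (by linarith : (0:ℝ) ≤ T) hy))
      · exact Filter.Eventually.of_forall fun s => hf0 s
      · exact Filter.Eventually.of_forall (fun y hy => le_trans htT hy.1)
    rw [hvol] at hge
    linarith
  -- conclude
  have hsqrt : Filter.Tendsto (fun t => Real.sqrt (f t)) Filter.atTop (nhds 0) := by
    have := (Real.continuous_sqrt.tendsto 0).comp hftends
    simpa [Function.comp_def] using this
  exact squeeze_zero_norm (fun t => norm_le_sqrt_dot (x t)) hsqrt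
end

section
/- For two subspaces V₁, V₂ ⊆ ℝⁿ there exists c > 0 such that dist(x, V₁)² + dist(x, V₂)² ≥ c · dist(x, V₁ ∩ V₂)² for all x ∈ ℝⁿ. -/
variable {n : ℕ}

private lemma infDist_eq_proj (K : Submodule ℝ (EuclideanSpace ℝ (Fin n)))
    (x : EuclideanSpace ℝ (Fin n)) :
    Metric.infDist x (K : Set (EuclideanSpace ℝ (Fin n)))
      = ‖x - Submodule.orthogonalProjectionOnto K x‖ := by
  rw [Metric.infDist_eq_iInf, ← Submodule.starProjection_apply, Submodule.starProjection_minimal]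
  simp_rw [dist_eq_norm]
  exact iInf_congr fun y => rfl

private lemma infDist_sub_mem (K : Submodule ℝ (EuclideanSpace ℝ (Fin n)))
    {u : EuclideanSpace ℝ (Fin n)} (hu : u ∈ K) (x : EuclideanSpace ℝ (Fin n)) :
    Metric.infDist (x - u) (K : Set (EuclideanSpace ℝ (Fin n)))
      = Metric.infDist x (K : Set (EuclideanSpace ℝ (Fin n))) := by
  rw [infDist_eq_proj, infDist_eq_proj, map_sub]
  have : (Submodule.orthogonalProjectionOnto K u : EuclideanSpace ℝ (Fin n)) = u :=
    Submodule.starProjection_eq_self_iff.2 hu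
  rw [Submodule.coe_sub, this]
  congr 1
  abel

private lemma infDist_smul (K : Submodule ℝ (EuclideanSpace ℝ (Fin n)))
    (t : ℝ) (x : EuclideanSpace ℝ (Fin n)) :
    Metric.infDist (t • x) (K : Set (EuclideanSpace ℝ (Fin n)))
      = |t| * Metric.infDist x (K : Set (EuclideanSpace ℝ (Fin n))) := by
  rw [infDist_eq_proj, infDist_eq_proj, map_smul]
  simp only [Submodule.coe_smul]
  rw [← smul_sub, norm_smul, Real.norm_eq_abs]

/-- For subspaces `V₁, V₂ ⊆ ℝⁿ` there is `c > 0` with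
`dist(x,V₁)² + dist(x,V₂)² ≥ c · dist(x, V₁ ∩ V₂)²` for all `x`. -/
theorem dist_inter_subspaces {n : ℕ}
    (V₁ V₂ : Submodule ℝ (EuclideanSpace ℝ (Fin n))) :
    ∃ c > (0 : ℝ), ∀ x : EuclideanSpace ℝ (Fin n),
      c * (Metric.infDist x ((V₁ ⊓ V₂ : Submodule ℝ (EuclideanSpace ℝ (Fin n))) : Set (EuclideanSpace ℝ (Fin n)))) ^ 2
        ≤ (Metric.infDist x (V₁ : Set (EuclideanSpace ℝ (Fin n)))) ^ 2
          + (Metric.infDist x (V₂ : Set (EuclideanSpace ℝ (Fin n)))) ^ 2 := by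
  set E := EuclideanSpace ℝ (Fin n)
  set U : Submodule ℝ E := V₁ ⊓ V₂ with hU
  by_cases hW : Uᗮ = ⊥
  · refine ⟨1, one_pos, fun x => ?_⟩
    have hx : x ∈ (U : Set E) := by
      rw [Submodule.orthogonal_eq_bot_iff.1 hW]; trivial
    rw [Metric.infDist_zero_of_mem hx]
    norm_num
    positivity
  · -- the compact sphere in Uᗮ
    set S : Set E := Metric.sphere 0 1 ∩ (Uᗮ : Set E) with hS
    have hScomp : IsCompact S :=
      (isCompact_sphere 0 1).inter_right (Uᗮ).closed_of_finiteDimensional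
    obtain ⟨w, hw0⟩ := Submodule.exists_mem_ne_zero_of_ne_bot hW
    have hSne : S.Nonempty := by
      refine ⟨‖w‖⁻¹ • w, ?_, Submodule.smul_mem _ _ hw0.1⟩
      simp [norm_smul, inv_mul_cancel₀ (norm_ne_zero_iff.2 hw0.2)]
    set f : E → ℝ := fun y =>
      Metric.infDist y (V₁ : Set E) ^ 2 + Metric.infDist y (V₂ : Set E) ^ 2 with hf
    have hfc : Continuous f := by
      exact ((Metric.continuous_infDist_pt _).pow 2).add
        ((Metric.continuous_infDist_pt _).pow 2)
    obtain ⟨w₀, hw₀S, hw₀min⟩ := hScomp.exists_isMinOn hSne hfc.continuousOn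
    have hc : 0 < f w₀ := by
      rcases lt_or_eq_of_le (by positivity : (0:ℝ) ≤ f w₀) with h | h
      · exact h
      exfalso
      have hsum : Metric.infDist w₀ (V₁ : Set E) ^ 2 + Metric.infDist w₀ (V₂ : Set E) ^ 2 = 0 := by
        simp only [hf] at h; linarith
      have h1 : Metric.infDist w₀ (V₁ : Set E) = 0 ∧ Metric.infDist w₀ (V₂ : Set E) = 0 := by
        constructor <;>
        · apply pow_eq_zero_iff (n := 2) (by norm_num) |>.1
          nlinarith [sq_nonneg (Metric.infDist w₀ (V₁ : Set E)),
            sq_nonneg (Metric.infDist w₀ (V₂ : Set E))]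
      have m1 : w₀ ∈ V₁ :=
        (V₁.closed_of_finiteDimensional.mem_iff_infDist_zero ⟨0, V₁.zero_mem⟩).2 h1.1
      have m2 : w₀ ∈ V₂ :=
        (V₂.closed_of_finiteDimensional.mem_iff_infDist_zero ⟨0, V₂.zero_mem⟩).2 h1.2
      have hUmem : w₀ ∈ U := ⟨m1, m2⟩
      have hWmem : w₀ ∈ Uᗮ := hw₀S.2
      have : w₀ = 0 := by
        have := Submodule.inner_right_of_mem_orthogonal hUmem hWmem
        exact inner_self_eq_zero.1
          (Submodule.inner_right_of_mem_orthogonal hUmem hWmem)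
      have : ‖w₀‖ = 1 := by simpa using hw₀S.1
      simp_all
    refine ⟨f w₀, hc, fun x => ?_⟩
    set u : E := (Submodule.orthogonalProjectionOnto U x : E)
    have hu : u ∈ U := (Submodule.orthogonalProjectionOnto U x).2
    set v : E := x - u with hv
    have hvW : v ∈ Uᗮ := Submodule.sub_starProjection_mem_orthogonal x
    have hdU : Metric.infDist x (U : Set E) = ‖v‖ := infDist_eq_proj U x
    have hd1 : Metric.infDist x (V₁ : Set E) = Metric.infDist v (V₁ : Set E) :=
      (infDist_sub_mem V₁ hu.1 x).symm
    have hd2 : Metric.infDist x (V₂ : Set E) = Metric.infDist v (V₂ : Set E) :=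
      (infDist_sub_mem V₂ hu.2 x).symm
    rw [hdU, hd1, hd2]
    rcases eq_or_ne v 0 with h0 | h0
    · have hz : f w₀ * ‖v‖ ^ 2 = 0 := by rw [h0]; simp
      rw [hz]
      positivity
    · have hn : ‖v‖ ≠ 0 := norm_ne_zero_iff.2 h0
      set v' : E := ‖v‖⁻¹ • v with hv'
      have hv'S : v' ∈ S :=
        ⟨by simp [hv', norm_smul, inv_mul_cancel₀ hn], Submodule.smul_mem _ _ hvW⟩
      have hmin := hw₀min hv'S
      have e1 : Metric.infDist v (V₁ : Set E) = ‖v‖ * Metric.infDist v' (V₁ : Set E) := by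
        rw [hv', infDist_smul, abs_inv, abs_norm]
        field_simp
      have e2 : Metric.infDist v (V₂ : Set E) = ‖v‖ * Metric.infDist v' (V₂ : Set E) := by
        rw [hv', infDist_smul, abs_inv, abs_norm]
        field_simp
      rw [e1, e2]
      have key : f w₀ ≤ Metric.infDist v' (V₁ : Set E) ^ 2
          + Metric.infDist v' (V₂ : Set E) ^ 2 := hmin
      calc f w₀ * ‖v‖ ^ 2
          ≤ (Metric.infDist v' (V₁ : Set E) ^ 2 + Metric.infDist v' (V₂ : Set E) ^ 2) * ‖v‖ ^ 2 :=
            mul_le_mul_of_nonneg_right key (sq_nonneg _)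
        _ = (‖v‖ * Metric.infDist v' (V₁ : Set E)) ^ 2
            + (‖v‖ * Metric.infDist v' (V₂ : Set E)) ^ 2 := by ring
end
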